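/- Let q be a prime power, ℓ an odd positive integer, and F_{q^{2ℓ}} the finite field with q^{2ℓ} elements containing F_{q^2} as a subfield. Then the number of elements ζ of the cyclic subgroup of order q^ℓ + 1 of the multiplicative group F_{q^{2ℓ}}^* (i.e., elements with ζ^{q^ℓ+1} = 1) that have exactly ℓ Galois conjugates over F_{q^2} is greater than (1 − 3/q^{ℓ/2})·(q^ℓ + 1). -/

import Mathlib

open Polynomial Finset IntermediateField

lemma aux_gcd_dvd (q d m : ℕ) (hq : 1 ≤ q) :
    Nat.gcd (q ^ (d * (2 * m + 1)) + 1) (q ^ (2 * d) - 1) ∣ q ^ d + 1 := by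
  set A := q ^ d with hA
  have hA1 : 1 ≤ A := Nat.one_le_pow _ _ hq
  have h2 : q ^ (2 * d) = A ^ 2 := by rw [hA, ← pow_mul, mul_comm]
  have hpow : q ^ (d * (2 * m + 1)) = A * (A ^ 2) ^ m := by
    rw [hA, ← pow_mul, ← pow_mul]; ring_nf
  have h1m : 1 ≤ (A ^ 2) ^ m := Nat.one_le_pow _ _ (by positivity)
  have key : A + 1 = (q ^ (d * (2 * m + 1)) + 1) - A * ((A ^ 2) ^ m - 1) := by
    rw [hpow]
    have h3 : A * ((A ^ 2) ^ m - 1) = A * (A ^ 2) ^ m - A := by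
      rw [Nat.mul_sub, mul_one]
    rw [h3]
    have : A ≤ A * (A ^ 2) ^ m := Nat.le_mul_of_pos_right _ (by omega)
    omega
  rw [key]
  apply Nat.dvd_sub
  · exact Nat.gcd_dvd_left _ _
  · exact Dvd.dvd.mul_left ((Nat.gcd_dvd_right _ _).trans (by
      rw [h2]
      simpa using Nat.sub_dvd_pow_sub_pow (A ^ 2) 1 m)) A

lemma aux_sum (q m : ℕ) (hq : 2 ≤ q) (hm : 1 ≤ m) :
    (∑ d ∈ Finset.Icc 1 m, (q ^ d + 1)) + 2 ≤ 2 * q ^ m + m := by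
  induction m with
  | zero => omega
  | succ k ih =>
    rcases Nat.eq_or_lt_of_le hm with h | h
    · simp [← h]; omega
    · have hk : 1 ≤ k := by omega
      have := ih hk
      rw [Finset.sum_Icc_succ_top (by omega)]
      have h2 : q ^ k * 2 ≤ q ^ (k + 1) := by
        rw [pow_succ]; exact Nat.mul_le_mul_left _ hq
      omega

lemma aux_pow_sub_one (F2 K : Type) [Field F2] [Fintype F2]
    [Field K] [Fintype K] [Algebra F2 K] (ζ : K) (hζ : ζ ≠ 0) :
    ζ ^ (Fintype.card F2 ^ (minpoly F2 ζ).natDegree - 1) = 1 := by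
  classical
  have hint : IsIntegral F2 ζ := IsIntegral.of_finite F2 ζ
  obtain ⟨n0, hn0⟩ : ∃ n0, (minpoly F2 ζ).natDegree = n0 := ⟨_, rfl⟩
  rw [hn0]
  set E := F2⟮ζ⟯ with hE
  have hcard : Fintype.card E = Fintype.card F2 ^ Module.finrank F2 E :=
    Module.card_eq_pow_finrank
  have hfr : Module.finrank F2 E = n0 := hn0 ▸ IntermediateField.adjoin.finrank hint
  set g : E := IntermediateField.AdjoinSimple.gen F2 ζ with hg
  have hpow : g ^ (Fintype.card E) = g := FiniteField.pow_card g
  have hζE : (g : K) = ζ := rfl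
  have hmain : ζ ^ (Fintype.card F2 ^ n0) = ζ := by
    rw [← hζE, ← hfr, ← hcard]
    exact_mod_cast congrArg (algebraMap E K) hpow
  have hc1 : 1 ≤ Fintype.card F2 ^ n0 := Nat.one_le_pow _ _ Fintype.card_pos
  have hcancel : ζ ^ (Fintype.card F2 ^ n0 - 1) * ζ = 1 * ζ := by
    rw [one_mul, ← pow_succ, Nat.sub_add_cancel hc1, hmain]
  exact mul_right_cancel₀ hζ hcancel

set_option maxHeartbeats 1000000 in
theorem count_degree_ell_elements_in_cyclic_subgroup_over_q_sq
    (F2 K : Type) [Field F2] [Fintype F2]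
    [Field K] [Fintype K] [Algebra F2 K] (q ℓ : ℕ)
    (hq : Fintype.card F2 = q ^ 2) (hℓ : Odd ℓ)
    (hK : Fintype.card K = q ^ (2 * ℓ)) :
    (1 - 3 / (q : ℝ) ^ ((ℓ : ℝ) / 2)) * ((q : ℝ) ^ ℓ + 1)
      < (Nat.card {ζ : K // ζ ^ (q ^ ℓ + 1) = 1
          ∧ (minpoly F2 ζ).natDegree = ℓ} : ℝ) := by
  classical
  have hℓpos : 0 < ℓ := hℓ.pos
  have hq2 : 2 ≤ q := by
    by_contra h
    push_neg at h
    have h1 : 1 < Fintype.card F2 := Fintype.one_lt_card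
    have : q ^ 2 ≤ 1 ^ 2 := Nat.pow_le_pow_left (by omega) 2
    omega
  set n := q ^ ℓ + 1 with hn
  have hqlpos : 1 ≤ q ^ ℓ := Nat.one_le_pow _ _ (by omega)
  have hnpos : 0 < n := by omega
  -- n divides card Kˣ
  have hfact : (q ^ ℓ + 1) * (q ^ ℓ - 1) = q ^ (2 * ℓ) - 1 := by
    obtain ⟨b, hb⟩ : ∃ b, q ^ ℓ = b + 1 := ⟨q ^ ℓ - 1, by omega⟩
    have h2 : q ^ (2 * ℓ) = (b + 1) * (b + 1) := by
      rw [two_mul, pow_add, hb]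
    rw [hb, h2]
    have h4 : b + 1 - 1 = b := by omega
    rw [h4]
    have h3 : (b + 1 + 1) * b + 1 = (b + 1) * (b + 1) := by ring
    omega
  have hcardU : Fintype.card Kˣ = q ^ (2 * ℓ) - 1 := by
    rw [Fintype.card_units, hK]
  have hdvd : n ∣ Fintype.card Kˣ := by
    rw [hcardU, ← hfact]
    exact Dvd.intro _ rfl
  -- primitive n-th root of unity
  obtain ⟨g, hg⟩ := IsCyclic.exists_ofOrder_eq_natCard (α := Kˣ)
  rw [Nat.card_eq_fintype_card] at hg
  have hgne : orderOf g ≠ 0 := by rw [hg]; exact Fintype.card_ne_zero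
  have hu : orderOf (g ^ (orderOf g / n)) = n :=
    orderOf_pow_orderOf_div hgne (hg ▸ hdvd)
  have hprim : IsPrimitiveRoot (((g ^ (orderOf g / n)) : Kˣ) : K) n := by
    apply IsPrimitiveRoot.coe_units_iff.mpr
    have h0 := IsPrimitiveRoot.orderOf (g ^ (orderOf g / n))
    rwa [hu] at h0
  have hT : (nthRootsFinset n (1 : K)).card = n := hprim.card_nthRootsFinset
  -- finrank
  have hrank : Module.finrank F2 K = ℓ := by
    have h1 : Fintype.card K = Fintype.card F2 ^ Module.finrank F2 K :=
      Module.card_eq_pow_finrank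
    rw [hK, hq, ← pow_mul] at h1
    have := Nat.pow_right_injective hq2 h1
    omega
  -- the good set
  set G : Finset K := Finset.univ.filter
    (fun ζ => ζ ^ n = 1 ∧ (minpoly F2 ζ).natDegree = ℓ) with hG
  have hGcard : (Nat.card {ζ : K // ζ ^ (q ^ ℓ + 1) = 1
      ∧ (minpoly F2 ζ).natDegree = ℓ}) = G.card := by
    rw [Nat.card_eq_fintype_card, hG]
    exact Fintype.card_subtype _
  -- bad sets
  set U : Finset K := (Nat.properDivisors ℓ).biUnion
    (fun d => nthRootsFinset (q ^ d + 1) (1 : K)) with hU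
  have hsub : nthRootsFinset n (1 : K) ⊆ G ∪ U := by
    intro ζ hζT
    have hζn : ζ ^ n = 1 := (Polynomial.mem_nthRootsFinset hnpos (1 : K)).mp hζT
    by_cases hdeg : (minpoly F2 ζ).natDegree = ℓ
    · exact Finset.mem_union_left _ (Finset.mem_filter.mpr
        ⟨Finset.mem_univ _, hζn, hdeg⟩)
    · have hζ0 : ζ ≠ 0 := by
        rintro rfl
        rw [zero_pow (by omega)] at hζn
        exact zero_ne_one hζn
      have hint : IsIntegral F2 ζ := IsIntegral.of_finite F2 ζ
      set d := (minpoly F2 ζ).natDegree with hd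
      have hddvd : d ∣ ℓ := hrank ▸ minpoly.degree_dvd hint
      have hdpos : 0 < d := minpoly.natDegree_pos hint
      obtain ⟨k, hk⟩ := hddvd
      have hkodd : Odd k := (Nat.odd_mul.mp (hk ▸ hℓ)).2
      obtain ⟨m, hm⟩ := hkodd
      have hℓdm : ℓ = d * (2 * m + 1) := by rw [hk, hm]
      -- ζ ^ (q^(2d) - 1) = 1
      have hpow2d : ζ ^ (q ^ (2 * d) - 1) = 1 := by
        have := aux_pow_sub_one F2 K ζ hζ0
        rwa [hq, ← pow_mul, ← hd] at this
      -- order divides gcd, gcd divides q^d + 1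
      have hgcd : Nat.gcd n (q ^ (2 * d) - 1) ∣ q ^ d + 1 := by
        rw [hn, hℓdm]
        exact aux_gcd_dvd q d m (by omega)
      have hζd : ζ ^ (q ^ d + 1) = 1 := by
        apply orderOf_dvd_iff_pow_eq_one.mp
        exact dvd_trans (Nat.dvd_gcd (orderOf_dvd_of_pow_eq_one hζn)
          (orderOf_dvd_of_pow_eq_one hpow2d)) hgcd
      refine Finset.mem_union_right _ (Finset.mem_biUnion.mpr ⟨d, ?_, ?_⟩)
      · refine Nat.mem_properDivisors.mpr ⟨⟨k, hk⟩, ?_⟩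
        rcases Nat.lt_or_ge d ℓ with h | h
        · exact h
        · exfalso; apply hdeg
          have : d ≤ ℓ := Nat.le_of_dvd hℓpos ⟨k, hk⟩
          omega
      · exact (Polynomial.mem_nthRootsFinset (by positivity) (1 : K)).mpr hζd
  -- counting
  have hroots_le : ∀ M : ℕ, (nthRootsFinset M (1 : K)).card ≤ M := fun M =>
    (Multiset.toFinset_card_le _).trans (by simpa using Polynomial.card_nthRoots M (1 : K))
  set mm := ℓ / 3 with hmm
  have hpd_sub : Nat.properDivisors ℓ ⊆ Finset.Icc 1 mm := by
    intro d hdmem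
    obtain ⟨⟨k, hk⟩, hlt⟩ := Nat.mem_properDivisors.mp hdmem
    have hdpos : 0 < d := by
      rcases Nat.eq_zero_or_pos d with h | h
      · exfalso; rw [h] at hk; omega
      · exact h
    have hkodd : Odd k := (Nat.odd_mul.mp (hk ▸ hℓ)).2
    have hk3 : 3 ≤ k := by
      obtain ⟨m, hm⟩ := hkodd
      rcases Nat.lt_or_ge k 3 with h | h
      · interval_cases k <;> omega
      · exact h
    have h3d : 3 * d ≤ ℓ := by
      calc 3 * d ≤ k * d := Nat.mul_le_mul_right d hk3
      _ = ℓ := by rw [hk]; ring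
    exact Finset.mem_Icc.mpr ⟨hdpos, Nat.le_div_iff_mul_le (by omega) |>.mpr (by omega)⟩
  have hcount : n ≤ G.card + ∑ d ∈ Finset.Icc 1 mm, (q ^ d + 1) := by
    calc n = (nthRootsFinset n (1 : K)).card := hT.symm
    _ ≤ (G ∪ U).card := Finset.card_le_card hsub
    _ ≤ G.card + U.card := Finset.card_union_le _ _
    _ ≤ G.card + ∑ d ∈ Nat.properDivisors ℓ, (q ^ d + 1) :=
        Nat.add_le_add_left ((Finset.card_biUnion_le).trans
          (Finset.sum_le_sum fun d _ => hroots_le _)) _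
    _ ≤ G.card + ∑ d ∈ Finset.Icc 1 mm, (q ^ d + 1) :=
        Nat.add_le_add_left (Finset.sum_le_sum_of_subset hpd_sub) _
  -- real estimates
  set S : ℕ := ∑ d ∈ Finset.Icc 1 mm, (q ^ d + 1) with hS
  set Q : ℝ := (q : ℝ) ^ ((ℓ : ℝ) / 2) with hQ
  have hqR : (2 : ℝ) ≤ (q : ℝ) := by exact_mod_cast hq2
  have hQpos : 0 < Q := Real.rpow_pos_of_pos (by linarith) _
  have hQQ : Q * Q = (q : ℝ) ^ ℓ := by
    rw [hQ, ← Real.rpow_add (by linarith), ← Real.rpow_natCast (q : ℝ) ℓ]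
    ring_nf
  -- S ≤ 3 Q
  have hSQ : (S : ℝ) ≤ 3 * Q := by
    rcases Nat.eq_zero_or_pos mm with hm0 | hm1
    · have hS0 : S = 0 := by rw [hS, hm0]; simp
      rw [hS0]
      simp only [Nat.cast_zero]
      positivity
    · have hnat := aux_sum q mm hq2 hm1
      have h3m : 3 * mm ≤ ℓ := by
        rw [hmm, mul_comm]
        exact Nat.div_mul_le_self ℓ 3
      set x : ℝ := (q : ℝ) ^ ((mm : ℝ) / 2) with hx
      have hxpos : 0 < x := Real.rpow_pos_of_pos (by linarith) _
      have hx2 : x * x = (q : ℝ) ^ mm := by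
        rw [hx, ← Real.rpow_add (by linarith), ← Real.rpow_natCast (q : ℝ) mm]
        ring_nf
      have hQge : (q : ℝ) ^ mm * x ≤ Q := by
        have h1 : (q : ℝ) ^ mm * x = (q : ℝ) ^ (((3 * mm : ℕ) : ℝ) / 2) := by
          rw [hx, ← Real.rpow_natCast (q : ℝ) mm, ← Real.rpow_add (by linarith)]
          congr 1
          push_cast; ring
        rw [h1, hQ]
        apply Real.rpow_le_rpow_of_exponent_le (by linarith)
        have h2 : ((3 * mm : ℕ) : ℝ) ≤ (ℓ : ℝ) := by exact_mod_cast h3m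
        linarith
      have hqm2 : (2 : ℝ) ≤ (q : ℝ) ^ mm := by
        have : 2 ≤ q ^ mm := by
          calc 2 = 2 ^ 1 := by norm_num
          _ ≤ 2 ^ mm := Nat.pow_le_pow_right (by norm_num) hm1
          _ ≤ q ^ mm := Nat.pow_le_pow_left hq2 mm
        exact_mod_cast this
      have hm2 : (mm : ℝ) + 1 ≤ (q : ℝ) ^ mm := by
        have : mm + 1 ≤ q ^ mm := by
          calc mm + 1 ≤ 2 ^ mm := Nat.lt_two_pow_self
          _ ≤ q ^ mm := Nat.pow_le_pow_left hq2 mm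
        exact_mod_cast this
      have hcast : (S : ℝ) + 2 ≤ 2 * (q : ℝ) ^ mm + mm := by
        exact_mod_cast hnat
      have hx4 : (4 : ℝ) ≤ 3 * x := by nlinarith [hx2, hqm2, hxpos]
      have hypos : (0 : ℝ) < (q : ℝ) ^ mm := by positivity
      have hyx : 4 * ((q : ℝ) ^ mm) ≤ 3 * ((q : ℝ) ^ mm * x) := by nlinarith [hx4, hypos]
      linarith [hQge, hcast, hm2, hyx, mul_le_mul_of_nonneg_left hQge (by norm_num : (0:ℝ) ≤ 3)]
  -- final
  rw [hGcard]
  have hGR : ((q : ℝ) ^ ℓ + 1) ≤ (G.card : ℝ) + (S : ℝ) := by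
    have : (n : ℝ) ≤ (G.card : ℝ) + (S : ℝ) := by exact_mod_cast hcount
    rw [hn] at this
    push_cast at this
    linarith
  have hrpos : (0 : ℝ) < 3 / Q := by positivity
  have hrN : (3 / Q) * ((q : ℝ) ^ ℓ) = 3 * Q := by
    rw [← hQQ]
    field_simp
  nlinarith [hGR, hSQ, hrN, hrpos, hQpos]
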